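/- Let I = (K_n^*, s, t, c, Q) be a QSPP instance with n ≥ 4, c = 0, and q_{ef} = 0 for every pair of arcs not contained together in any s-t path. Then the average cost of all s-t paths of length k is at most the average cost of all s-t paths of length k+1, i.e., CP_k / |P_k| ≤ CP_{k+1} / |P_{k+1}| for every k = 3, …, n−2, where |P_k| = C(n−2, k−1)·(k−1)!. -/

import Mathlib

/-- An `s`-`t` path in the digraph on vertex type `V` with arc relation `A`,
represented as the list of its (distinct) vertices. -/
def IsPath {V : Type*} (A : V → V → Prop) (s t : V) (P : List V) : Prop :=
  2 ≤ P.length ∧ P.head? = some s ∧ P.getLast? = some t ∧ P.Nodup ∧ P.Chain' A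

/-- The arcs traversed by a path, as the list of ordered pairs of consecutive vertices. -/
def arcsOf {V : Type*} (P : List V) : List (V × V) :=
  P.zip P.tail

/-- Linear cost `C(P,c)` of a path. -/
noncomputable def linCost {V : Type*} (c : V × V → ℝ) (P : List V) : ℝ :=
  ((arcsOf P).map c).sum

/-- Total (quadratic) cost `C(P,c,Q)` of a path: the sum of the interaction costs over all
ordered pairs of arcs of `P` plus the sum of the linear costs of the arcs of `P`. -/
noncomputable def cost {V : Type*} (c : V × V → ℝ) (Q : V × V → V × V → ℝ)
    (P : List V) : ℝ :=
  ((arcsOf P).map fun e => ((arcsOf P).map fun f => Q e f).sum).sum + linCost c P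

/-- A QSPP instance `(G,s,t,c,Q)` is linearizable if there is a nonnegative cost vector `c'`
such that `C(P,c,Q) = C(P,c')` for every `s`-`t` path `P`. -/
def Linearizable {V : Type*} (A : V → V → Prop) (s t : V) (c : V × V → ℝ)
    (Q : V × V → V × V → ℝ) : Prop :=
  ∃ c' : V × V → ℝ, (∀ e, 0 ≤ c' e) ∧
    ∀ P, IsPath A s t P → cost c Q P = linCost c' P

/-- The arc relation of the complete symmetric digraph `K_n^*` on vertices `1,…,n`
with source `1` and target `n`, from which the incoming arcs of the source, the
outgoing arcs of the target and the arc from source to target have been removed. -/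
def knArc (n : ℕ) : ℕ → ℕ → Prop := fun i j =>
  1 ≤ i ∧ i ≤ n ∧ 1 ≤ j ∧ j ≤ n ∧ i ≠ j ∧ j ≠ 1 ∧ i ≠ n ∧ ¬(i = 1 ∧ j = n)

/-- `CP_k`: the total cost (with zero linear costs) of all `s`-`t` paths of length `k`
in `K_n^*`. -/
noncomputable def CPsum (n : ℕ) (Q : ℕ × ℕ → ℕ × ℕ → ℝ) (k : ℕ) : ℝ :=
  ∑ᶠ (P : List ℕ) (_ : IsPath (knArc n) 1 n P ∧ P.length = k + 1),
    cost (fun _ => 0) Q P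

open List Finset
lemma length_arcsOf {V : Type*} (P : List V) (hP : P ≠ []) :
    (arcsOf P).length = P.length - 1 := by
  simp [arcsOf, List.length_zip, List.length_tail]

lemma mem_arcsOf_iff {V : Type*} (P : List V) (u v : V) :
    (u, v) ∈ arcsOf P ↔ ∃ i, ∃ h : i + 1 < P.length, P[i] = u ∧ P[i+1] = v := by
  rw [arcsOf, List.mem_iff_getElem]
  constructor
  · rintro ⟨i, hi, hx⟩
    have hi' : i + 1 < P.length := by
      simp [List.length_zip, List.length_tail] at hi; omega
    refine ⟨i, hi', ?_, ?_⟩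
    · have := List.getElem_zip (l := P) (l' := P.tail) (i := i) (h := hi)
      rw [this] at hx
      exact (congrArg Prod.fst hx)
    · have := List.getElem_zip (l := P) (l' := P.tail) (i := i) (h := hi)
      rw [this] at hx
      have h2 := congrArg Prod.snd hx
      simpa [List.getElem_tail] using h2
  · rintro ⟨i, hi, h1, h2⟩
    have hi' : i < (P.zip P.tail).length := by
      simp [List.length_zip, List.length_tail]; omega
    refine ⟨i, hi', ?_⟩
    rw [List.getElem_zip, List.getElem_tail, h1, h2]

lemma mem_of_mem_arcsOf {V : Type*} {P : List V} {u v : V} (h : (u, v) ∈ arcsOf P) :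
    u ∈ P ∧ v ∈ P := by
  rw [mem_arcsOf_iff] at h
  obtain ⟨i, hi, h1, h2⟩ := h
  constructor
  · exact h1 ▸ List.getElem_mem _
  · exact h2 ▸ List.getElem_mem _

lemma arcsOf_cons_cons {V : Type*} (a b : V) (t : List V) :
    arcsOf (a :: b :: t) = (a, b) :: arcsOf (b :: t) := by
  simp [arcsOf, List.zip]

lemma nodup_arcsOf {V : Type*} {P : List V} (h : P.Nodup) : (arcsOf P).Nodup := by
  induction P with
  | nil => simp [arcsOf]
  | cons a t ih =>
    cases t with
    | nil => simp [arcsOf]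
    | cons b t' =>
      rw [arcsOf_cons_cons]
      refine List.Nodup.cons ?_ (ih h.of_cons)
      intro hmem
      have := (mem_of_mem_arcsOf hmem).1
      exact (List.nodup_cons.mp h).1 this

lemma path_ne_nil {A s t} {P : List ℕ} (h : IsPath A s t P) : P ≠ [] := by
  intro hP; rw [hP] at h; simp [IsPath] at h

lemma path_getElem_zero {A s t} {P : List ℕ} (h : IsPath A s t P) :
    ∃ h0 : 0 < P.length, P[0] = s := by
  obtain ⟨hl, hh, -, -, -⟩ := h
  have : P ≠ [] := by intro hP; simp [hP] at hh
  refine ⟨List.length_pos_iff.mpr this, ?_⟩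
  rw [List.head?_eq_head this] at hh
  rw [← List.head_eq_getElem this]
  exact Option.some_injective _ hh

lemma path_getElem_last {A s t} {P : List ℕ} (h : IsPath A s t P) :
    ∃ h0 : P.length - 1 < P.length, P[P.length - 1] = t := by
  obtain ⟨hl, -, hh, -, -⟩ := h
  have hne : P ≠ [] := by intro hP; simp [hP] at hh
  have h0 : 0 < P.length := List.length_pos_iff.mpr hne
  refine ⟨by omega, ?_⟩
  rw [List.getLast?_eq_getLast hne] at hh
  rw [← List.getLast_eq_getElem hne]
  exact Option.some_injective _ hh

lemma chain'_getElem {R : ℕ → ℕ → Prop} {P : List ℕ} (h : P.Chain' R)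
    {i : ℕ} (hi : i + 1 < P.length) : R P[i] P[i+1] :=
  List.isChain_iff_getElem.mp h i (by omega)

/-- vertex bounds on a path in knArc -/
lemma path_vertex_bounds {P : List ℕ} (h : IsPath (knArc n) 1 n P) :
    ∀ v ∈ P, 1 ≤ v ∧ v ≤ n := by
  intro v hv
  rw [List.mem_iff_getElem] at hv
  obtain ⟨i, hi, rfl⟩ := hv
  rcases Nat.eq_zero_or_pos i with rfl | hpos
  · obtain ⟨h0, he⟩ := path_getElem_zero h
    rw [he]
    have : 2 ≤ P.length := h.1
    have hn : 1 ≤ n := by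
      -- last vertex is n and knArc gives bounds; easier: chain' on first arc
      have h1 : 0 + 1 < P.length := by omega
      have := chain'_getElem h.2.2.2.2 h1
      exact this.2.2.2.1.trans_eq rfl |>.trans' this.2.2.1
    exact ⟨le_refl 1, hn⟩
  · obtain ⟨j, rfl⟩ := Nat.exists_eq_add_of_lt hpos
    have hj : j + 1 < P.length := by omega
    have := chain'_getElem h.2.2.2.2 hj
    simpa using ⟨this.2.2.1, this.2.2.2.1⟩

lemma path_getElem_ne_one {P : List ℕ} (h : IsPath (knArc n) 1 n P)
    {i : ℕ} (hi : i < P.length) (hpos : 0 < i) : P[i] ≠ 1 := by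
  obtain ⟨h0, he⟩ := path_getElem_zero h
  intro hc
  have := (List.Nodup.getElem_inj_iff h.2.2.2.1).mp (hc.trans he.symm)
  omega

lemma path_getElem_ne_top {P : List ℕ} (h : IsPath (knArc n) 1 n P)
    {i : ℕ} (hi : i < P.length) (hlt : i < P.length - 1) : P[i] ≠ n := by
  obtain ⟨h0, he⟩ := path_getElem_last h
  intro hc
  have := (List.Nodup.getElem_inj_iff h.2.2.2.1).mp (hc.trans he.symm)
  omega

lemma path_one_mem {P : List ℕ} (h : IsPath (knArc n) 1 n P) : 1 ∈ P := by
  obtain ⟨h0, he⟩ := path_getElem_zero h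
  exact he ▸ List.getElem_mem _

lemma path_top_mem {P : List ℕ} (h : IsPath (knArc n) 1 n P) : n ∈ P := by
  obtain ⟨h0, he⟩ := path_getElem_last h
  exact he ▸ List.getElem_mem _

/-- all nodup lists of given length with entries `< n+1` -/
def allLists (n len : ℕ) : Finset (List ℕ) :=
  (((List.range (n+1)).sublistsLen len).flatMap List.permutations).toFinset

lemma mem_allLists {n len : ℕ} {l : List ℕ} :
    l ∈ allLists n len ↔ l.length = len ∧ l.Nodup ∧ ∀ x ∈ l, x < n + 1 := by
  rw [allLists, List.mem_toFinset, List.mem_flatMap]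
  constructor
  · rintro ⟨s, hs, hl⟩
    rw [List.mem_sublistsLen] at hs
    rw [List.mem_permutations] at hl
    refine ⟨hl.length_eq.trans hs.2, ?_, ?_⟩
    · exact hl.nodup_iff.mpr (hs.1.nodup (List.nodup_range))
    · intro x hx
      have : x ∈ List.range (n+1) := hs.1.mem (hl.mem_iff.mp hx)
      simpa using this
  · rintro ⟨hlen, hnd, hmem⟩
    have hsub : l.Subperm (List.range (n+1)) := by
      rw [List.subperm_ext_iff]
      intro x hx
      have h1 : l.count x ≤ 1 := List.nodup_iff_count_le_one.mp hnd x
      have h2 : (List.range (n+1)).count x = 1 :=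
        List.count_eq_one_of_mem (List.nodup_range) (List.mem_range.mpr (hmem x hx))
      omega
    obtain ⟨s, hsp, hss⟩ := hsub
    refine ⟨s, ?_, ?_⟩
    · rw [List.mem_sublistsLen]
      exact ⟨hss, hsp.length_eq.trans hlen⟩
    · rw [List.mem_permutations]
      exact hsp.symm

/-- the Finset of s-t paths of length k (lists of length k+1) -/
noncomputable def pathsF (n k : ℕ) : Finset (List ℕ) :=
  letI := Classical.decPred (fun P => IsPath (knArc n) 1 n P)
  (allLists n (k+1)).filter (fun P => IsPath (knArc n) 1 n P)

lemma mem_pathsF {n k : ℕ} {P : List ℕ} :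
    P ∈ pathsF n k ↔ IsPath (knArc n) 1 n P ∧ P.length = k + 1 := by
  rw [pathsF]
  letI := Classical.decPred (fun P => IsPath (knArc n) 1 n P)
  rw [Finset.mem_filter, mem_allLists]
  constructor
  · rintro ⟨⟨h1, -, -⟩, h2⟩; exact ⟨h2, h1⟩
  · rintro ⟨h1, h2⟩
    refine ⟨⟨h2, h1.2.2.2.1, ?_⟩, h1⟩
    intro x hx
    have := path_vertex_bounds h1 x hx
    omega

lemma arcsOf_append {V : Type*} : ∀ (A B : List V) (hA : A ≠ []) (hB : B ≠ []),
    arcsOf (A ++ B) = arcsOf A ++ (A.getLast hA, B.head hB) :: arcsOf B := by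
  intro A
  induction A with
  | nil => intro B hA hB; exact absurd rfl hA
  | cons a A' ih =>
    intro B hA hB
    cases A' with
    | nil =>
      cases B with
      | nil => exact absurd rfl hB
      | cons b B' => simp [arcsOf_cons_cons, arcsOf]
    | cons a' A'' =>
      have h1 : (a' :: A'') ++ B = a' :: (A'' ++ B) := rfl
      have h2 : (a :: a' :: A'') ++ B = a :: a' :: (A'' ++ B) := rfl
      rw [h2, arcsOf_cons_cons, ← h1, ih _ (by simp) hB, arcsOf_cons_cons]
      simp [List.getLast_cons]

section Insert
variable {n : ℕ}

/-- The main insertion lemma. -/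
lemma insert_path {P : List ℕ} (hP : IsPath (knArc n) 1 n P)
    {x i : ℕ} (hx1 : x ∉ P) (hx2 : 2 ≤ x) (hx3 : x < n) (hi : i + 1 < P.length) :
    IsPath (knArc n) 1 n (P.take (i+1) ++ x :: P.drop (i+1)) ∧
    (P.take (i+1) ++ x :: P.drop (i+1)).length = P.length + 1 ∧
    (∀ g ∈ arcsOf P, g ≠ (P[i], P[i+1]) → g ∈ arcsOf (P.take (i+1) ++ x :: P.drop (i+1))) := by
  set A := P.take (i+1) with hAdef
  set B := P.drop (i+1) with hBdef
  have hPlen : 2 ≤ P.length := hP.1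
  have hAlen : A.length = i + 1 := by rw [hAdef, List.length_take]; omega
  have hBlen : B.length = P.length - (i+1) := by rw [hBdef, List.length_drop]
  have hAne : A ≠ [] := by intro h; rw [h] at hAlen; simp at hAlen
  have hBne : B ≠ [] := by
    intro h; rw [h] at hBlen; simp at hBlen; omega
  have hAB : A ++ B = P := List.take_append_drop _ _
  -- the endpoints of the split gap
  have hgA : A.getLast hAne = P[i] := by
    rw [List.getLast_eq_getElem]
    simp only [hAlen, Nat.add_sub_cancel]
    exact List.getElem_take
  have hhB : B.head hBne = P[i+1] := by
    rw [List.head_eq_getElem]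
    exact List.getElem_drop (xs := P) (i := i+1) (j := 0) (h := by rw [hBlen]; omega)
  -- vertex facts
  have hPi_mem : P[i]'(by omega) ∈ P := List.getElem_mem _
  have hPi1_mem : P[i+1] ∈ P := List.getElem_mem _
  have hPi_b := path_vertex_bounds hP _ hPi_mem
  have hPi1_b := path_vertex_bounds hP _ hPi1_mem
  have hPi_ne_top : P[i]'(by omega) ≠ n := path_getElem_ne_top hP (by omega) (by omega)
  have hPi1_ne_one : P[i+1] ≠ 1 := path_getElem_ne_one hP hi (by omega)
  have harc1 : knArc n (P[i]'(by omega)) x := by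
    refine ⟨hPi_b.1, hPi_b.2, by omega, by omega, ?_, by omega, hPi_ne_top, by omega⟩
    intro h; exact hx1 (h ▸ hPi_mem)
  have harc2 : knArc n x P[i+1] := by
    refine ⟨by omega, by omega, hPi1_b.1, hPi1_b.2, ?_, hPi1_ne_one, by omega, by omega⟩
    intro h; exact hx1 (h ▸ hPi1_mem)
  -- chain'
  have hchain : (A ++ x :: B).Chain' (knArc n) := by
    rw [List.Chain', List.isChain_append]
    refine ⟨(show List.IsChain _ P from hP.2.2.2.2).take (i+1), ?_, ?_⟩
    · rw [List.isChain_cons]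
      refine ⟨?_, (show List.IsChain _ P from hP.2.2.2.2).drop (i+1)⟩
      intro y hy
      rw [List.head?_eq_head hBne, Option.mem_def, Option.some.injEq] at hy
      rw [← hy, hhB]; exact harc2
    · intro a ha b hb
      rw [List.getLast?_eq_getLast hAne, Option.mem_def, Option.some.injEq] at ha
      simp only [List.head?_cons, Option.mem_def, Option.some.injEq] at hb
      rw [← ha, ← hb, hgA]
      exact harc1
  -- head
  have hhead : (A ++ x :: B).head? = some 1 := by
    rw [List.head?_append, List.head?_eq_head hAne, Option.or]
    congr 1
    rw [List.head_eq_getElem]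
    have h0 : A[0]'(by rw [hAlen]; omega) = P[0]'(by omega) := List.getElem_take
    rw [h0]
    obtain ⟨h1, he⟩ := path_getElem_zero hP
    exact he
  -- last
  have hlast : (A ++ x :: B).getLast? = some n := by
    rw [List.getLast?_append]
    have h1 : (x :: B).getLast? = some ((x :: B).getLast (by simp)) :=
      List.getLast?_eq_getLast _
    rw [h1, List.getLast_cons hBne, Option.or]
    congr 1
    rw [List.getLast_eq_getElem]
    have h2 : B[B.length - 1]'(by have := List.length_pos_iff.mpr hBne; omega) =
        P[(i+1) + (B.length - 1)]'(by rw [hBlen]; omega) := List.getElem_drop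
    rw [h2]
    obtain ⟨h3, he⟩ := path_getElem_last hP
    have h4 : (i+1) + (B.length - 1) = P.length - 1 := by
      rw [hBlen]; omega
    simp only [h4]
    exact he
  -- nodup
  have hnd : (A ++ x :: B).Nodup := by
    rw [List.nodup_middle, List.nodup_cons, hAB]
    exact ⟨hx1, hP.2.2.2.1⟩
  -- length
  have hlen : (A ++ x :: B).length = P.length + 1 := by
    rw [List.length_append, List.length_cons, hAlen, hBlen]; omega
  -- arcs decomposition
  have harcP : arcsOf P = arcsOf A ++ (P[i], P[i+1]) :: arcsOf B := by
    conv_lhs => rw [← hAB]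
    rw [arcsOf_append A B hAne hBne, hgA, hhB]
  have harcs : arcsOf (A ++ x :: B) =
      arcsOf A ++ (P[i], x) :: (x, P[i+1]) :: arcsOf B := by
    have hxB : arcsOf (x :: B) = (x, P[i+1]) :: arcsOf B := by
      have := arcsOf_append [x] B (by simp) hBne
      have h0 : arcsOf [x] = [] := rfl
      simpa [hhB, h0] using this
    rw [arcsOf_append A (x :: B) hAne (by simp), hgA, hxB]
    simp
  refine ⟨⟨by rw [hlen]; omega, hhead, hlast, hnd, hchain⟩, hlen, ?_⟩
  intro g hg hne
  rw [harcP, List.mem_append, List.mem_cons] at hg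
  rw [harcs, List.mem_append, List.mem_cons, List.mem_cons]
  rcases hg with h | h | h
  · exact Or.inl h
  · exact absurd h hne
  · exact Or.inr (Or.inr (Or.inr h))
end Insert

lemma idxOf_append_cons {x : ℕ} : ∀ (A B : List ℕ), x ∉ A →
    (A ++ x :: B).idxOf x = A.length := by
  intro A
  induction A with
  | nil => intro B _; simp
  | cons a A' ih =>
    intro B hx
    rw [List.cons_append, List.length_cons]
    rw [List.idxOf_cons_ne _ (by simp at hx; exact fun h => hx.1 h.symm)]
    rw [ih B (by simp at hx; exact hx.2)]

lemma eraseIdx_append_cons {x : ℕ} : ∀ (A B : List ℕ),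
    (A ++ x :: B).eraseIdx A.length = A ++ B := by
  intro A
  induction A with
  | nil => intro B; simp
  | cons a A' ih => intro B; simp [List.eraseIdx, ih]

section Counting
open Classical in
/-- The key counting inequality. -/
lemma N_mono (n k : ℕ) (hn : 4 ≤ n) (hk : 3 ≤ k) (hk2 : k ≤ n - 2)
    (e f : ℕ × ℕ) (p q : ℕ) (hpq : p ≠ q) (hp1 : p ≠ 1) (hpn : p ≠ n)
    (hq1 : q ≠ 1) (hqn : q ≠ n)
    (hV : ∀ P : List ℕ, e ∈ arcsOf P → f ∈ arcsOf P → p ∈ P ∧ q ∈ P) :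
    (n - 1 - k) * ((pathsF n k).filter (fun P => e ∈ arcsOf P ∧ f ∈ arcsOf P)).card ≤
    ((pathsF n (k+1)).filter (fun P => e ∈ arcsOf P ∧ f ∈ arcsOf P)).card := by
  set Sk := (pathsF n k).filter (fun P => e ∈ arcsOf P ∧ f ∈ arcsOf P) with hSk
  set Sk1 := (pathsF n (k+1)).filter (fun P => e ∈ arcsOf P ∧ f ∈ arcsOf P) with hSk1
  -- gap arc
  set gap : List ℕ → ℕ → ℕ × ℕ := fun P i => (P.getD i 0, P.getD (i+1) 0) with hgap
  set L : Finset ((_ : List ℕ) × ℕ × ℕ) :=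
    Sk.sigma (fun P => ((Finset.Ico 2 n).filter (fun x => x ∉ P)) ×ˢ
      ((Finset.range k).filter (fun i => gap P i ≠ e ∧ gap P i ≠ f))) with hL
  set R : Finset ((_ : List ℕ) × ℕ) :=
    Sk1.sigma (fun P' => (Finset.range (n+1)).filter
      (fun v => v ∈ P' ∧ v ≠ 1 ∧ v ≠ n ∧ v ≠ p ∧ v ≠ q)) with hR
  -- basic facts about members of Sk
  have hSk_mem : ∀ P ∈ Sk, IsPath (knArc n) 1 n P ∧ P.length = k + 1 ∧
      e ∈ arcsOf P ∧ f ∈ arcsOf P := by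
    intro P hP
    rw [hSk, Finset.mem_filter, mem_pathsF] at hP
    exact ⟨hP.1.1, hP.1.2, hP.2.1, hP.2.2⟩
  have hSk1_mem : ∀ P ∈ Sk1, IsPath (knArc n) 1 n P ∧ P.length = k + 2 ∧
      e ∈ arcsOf P ∧ f ∈ arcsOf P := by
    intro P hP
    rw [hSk1, Finset.mem_filter, mem_pathsF] at hP
    exact ⟨hP.1.1, hP.1.2, hP.2.1, hP.2.2⟩
  -- Lower bound on card L
  have hcardL : Sk.card * ((n - 1 - k) * (k - 2)) ≤ L.card := by
    rw [hL, Finset.card_sigma, ← smul_eq_mul, ← Finset.sum_const]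
    refine Finset.sum_le_sum ?_
    intro P hP
    obtain ⟨hPath, hlen, he, hf⟩ := hSk_mem P hP
    rw [Finset.card_product]
    have hT : P.toFinset.card = k + 1 := by
      rw [List.toFinset_card_of_nodup hPath.2.2.2.1, hlen]
    have hsub : ({1, n} : Finset ℕ) ⊆ P.toFinset := by
      intro a ha
      simp only [Finset.mem_insert, Finset.mem_singleton] at ha
      rcases ha with rfl | rfl
      · exact List.mem_toFinset.mpr (path_one_mem hPath)
      · exact List.mem_toFinset.mpr (path_top_mem hPath)
    have hc2 : ({1, n} : Finset ℕ).card = 2 := by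
      rw [Finset.card_insert_of_notMem (by simp; omega), Finset.card_singleton]
    have hTc : (P.toFinset \ {1, n}).card = k - 1 := by
      rw [Finset.card_sdiff_of_subset hsub, hT, hc2]
      omega
    -- unused vertices
    have h1 : n - 1 - k ≤ ((Finset.Ico 2 n).filter (fun x => x ∉ P)).card := by
      have heq : (Finset.Ico 2 n).filter (fun x => x ∉ P) =
          Finset.Ico 2 n \ (P.toFinset \ {1, n}) := by
        ext a
        simp only [Finset.mem_filter, Finset.mem_sdiff, Finset.mem_Ico,
          List.mem_toFinset, Finset.mem_insert, Finset.mem_singleton]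
        constructor
        · rintro ⟨⟨h2, h3⟩, h4⟩
          exact ⟨⟨h2, h3⟩, fun hc => h4 hc.1⟩
        · rintro ⟨⟨h2, h3⟩, h4⟩
          refine ⟨⟨h2, h3⟩, fun hc => h4 ⟨hc, ?_⟩⟩
          push_neg
          exact ⟨by omega, by omega⟩
      rw [heq]
      have := Finset.le_card_sdiff (P.toFinset \ {1, n}) (Finset.Ico 2 n)
      rw [hTc, Nat.card_Ico] at this
      omega
    -- safe gaps
    have h2 : k - 2 ≤ ((Finset.range k).filter (fun i => gap P i ≠ e ∧ gap P i ≠ f)).card := by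
      have hsum := Finset.card_filter_add_card_filter_not
        (s := Finset.range k) (p := fun i => gap P i ≠ e ∧ gap P i ≠ f)
      rw [Finset.card_range] at hsum
      have hone : ∀ g : ℕ × ℕ, ((Finset.range k).filter (fun i => gap P i = g)).card ≤ 1 := by
        intro g
        rw [Finset.card_le_one]
        intro a ha b hb
        rw [Finset.mem_filter, Finset.mem_range] at ha hb
        have hga : P.getD a 0 = g.1 := congrArg Prod.fst ha.2
        have hgb : P.getD b 0 = g.1 := congrArg Prod.fst hb.2
        rw [List.getD_eq_getElem P 0 (by omega)] at hga hgb
        have := (List.Nodup.getElem_inj_iff hPath.2.2.2.1).mp (hga.trans hgb.symm)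
        exact this
      have hsub2 : (Finset.range k).filter (fun i => ¬(gap P i ≠ e ∧ gap P i ≠ f)) ⊆
          ((Finset.range k).filter (fun i => gap P i = e)) ∪
          ((Finset.range k).filter (fun i => gap P i = f)) := by
        intro i hi
        rw [Finset.mem_filter] at hi
        rw [Finset.mem_union, Finset.mem_filter, Finset.mem_filter]
        rcases not_and_or.mp hi.2 with h | h
        · exact Or.inl ⟨hi.1, not_not.mp h⟩
        · exact Or.inr ⟨hi.1, not_not.mp h⟩
      have h3 := Finset.card_le_card hsub2
      have h4 := Finset.card_union_le ((Finset.range k).filter (fun i => gap P i = e))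
        ((Finset.range k).filter (fun i => gap P i = f))
      have h5 := hone e
      have h6 := hone f
      omega
    calc (n - 1 - k) * (k - 2) ≤ ((Finset.Ico 2 n).filter (fun x => x ∉ P)).card *
        (((Finset.range k).filter (fun i => gap P i ≠ e ∧ gap P i ≠ f)).card) :=
          Nat.mul_le_mul h1 h2
      _ = _ := rfl
  -- the insertion map
  have hmaps : ∀ z ∈ L, (⟨z.1.take (z.2.2+1) ++ z.2.1 :: z.1.drop (z.2.2+1), z.2.1⟩ :
      (_ : List ℕ) × ℕ) ∈ R := by
    rintro ⟨P, x, i⟩ hz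
    dsimp only at hz ⊢
    simp only [hL, hSk, Finset.mem_sigma, Finset.mem_product, Finset.mem_filter,
      Finset.mem_Ico, Finset.mem_range] at hz
    obtain ⟨⟨hPF, he, hf⟩, ⟨⟨hx2, hx3⟩, hx1⟩, hik, hge, hgf⟩ := hz
    rw [mem_pathsF] at hPF
    obtain ⟨hPath, hlen⟩ := hPF
    have hi : i + 1 < P.length := by omega
    obtain ⟨hP', hlen', htrans⟩ := insert_path hPath hx1 hx2 hx3 hi
    have hgapeq : gap P i = (P[i], P[i+1]) := by
      rw [hgap]
      simp only
      rw [List.getD_eq_getElem P 0 (by omega), List.getD_eq_getElem P 0 hi]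
    rw [hR, Finset.mem_sigma]
    dsimp only
    constructor
    · rw [hSk1, Finset.mem_filter, mem_pathsF]
      refine ⟨⟨hP', by rw [hlen', hlen]⟩, ?_, ?_⟩
      · exact htrans e he (by rw [← hgapeq]; exact fun hc => hge hc.symm)
      · exact htrans f hf (by rw [← hgapeq]; exact fun hc => hgf hc.symm)
    · rw [Finset.mem_filter, Finset.mem_range]
      obtain ⟨hpP, hqP⟩ := hV P he hf
      refine ⟨by omega, by simp, by omega, by omega, ?_, ?_⟩
      · intro hc; exact hx1 (hc ▸ hpP)
      · intro hc; exact hx1 (hc ▸ hqP)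
  -- injectivity
  have hinj : Set.InjOn (fun z : (_ : List ℕ) × ℕ × ℕ =>
      (⟨z.1.take (z.2.2+1) ++ z.2.1 :: z.1.drop (z.2.2+1), z.2.1⟩ : (_ : List ℕ) × ℕ)) L := by
    rintro ⟨P₁, x₁, i₁⟩ h₁ ⟨P₂, x₂, i₂⟩ h₂ heq
    rw [Finset.mem_coe] at h₁ h₂
    simp only [hL, hSk, Finset.mem_sigma, Finset.mem_product, Finset.mem_filter,
      Finset.mem_Ico, Finset.mem_range] at h₁ h₂
    obtain ⟨⟨hPF₁, -, -⟩, ⟨⟨hx2₁, hx3₁⟩, hx1₁⟩, hik₁, -, -⟩ := h₁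
    obtain ⟨⟨hPF₂, -, -⟩, ⟨⟨hx2₂, hx3₂⟩, hx1₂⟩, hik₂, -, -⟩ := h₂
    rw [mem_pathsF] at hPF₁ hPF₂
    dsimp only at heq
    have hfst : P₁.take (i₁+1) ++ x₁ :: P₁.drop (i₁+1) =
        P₂.take (i₂+1) ++ x₂ :: P₂.drop (i₂+1) := congrArg Sigma.fst heq
    have hsnd : x₁ = x₂ := congrArg Sigma.snd heq
    subst hsnd
    have hlA₁ : (P₁.take (i₁+1)).length = i₁ + 1 := by
      rw [List.length_take]; omega
    have hlA₂ : (P₂.take (i₂+1)).length = i₂ + 1 := by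
      rw [List.length_take]; omega
    have hnx₁ : x₁ ∉ P₁.take (i₁+1) := fun hc => hx1₁ (List.mem_of_mem_take hc)
    have hnx₂ : x₁ ∉ P₂.take (i₂+1) := fun hc => hx1₂ (List.mem_of_mem_take hc)
    have e₁ := idxOf_append_cons (P₁.take (i₁+1)) (P₁.drop (i₁+1)) hnx₁
    have e₂ := idxOf_append_cons (P₂.take (i₂+1)) (P₂.drop (i₂+1)) hnx₂
    rw [hfst] at e₁
    have hii : i₁ = i₂ := by rw [e₂] at e₁; rw [hlA₁, hlA₂] at e₁; omega
    have d₁ := eraseIdx_append_cons (x := x₁) (P₁.take (i₁+1)) (P₁.drop (i₁+1))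
    have d₂ := eraseIdx_append_cons (x := x₁) (P₂.take (i₂+1)) (P₂.drop (i₂+1))
    rw [hfst] at d₁
    rw [hlA₁] at d₁
    rw [hlA₂] at d₂
    rw [hii] at d₁
    rw [d₂] at d₁
    rw [List.take_append_drop, List.take_append_drop] at d₁
    subst hii
    rw [d₁]
  -- upper bound on card R
  have hcardR : R.card ≤ Sk1.card * (k - 2) := by
    rw [hR, Finset.card_sigma]
    calc ∑ P' ∈ Sk1, ((Finset.range (n+1)).filter
          (fun v => v ∈ P' ∧ v ≠ 1 ∧ v ≠ n ∧ v ≠ p ∧ v ≠ q)).card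
        ≤ ∑ P' ∈ Sk1, (k - 2) := by
          refine Finset.sum_le_sum ?_
          intro P' hP'
          obtain ⟨hPath, hlen, he, hf⟩ := hSk1_mem P' hP'
          obtain ⟨hpP, hqP⟩ := hV P' he hf
          have hT : P'.toFinset.card = k + 2 := by
            rw [List.toFinset_card_of_nodup hPath.2.2.2.1, hlen]
          have hsub1 : ({1, n} : Finset ℕ) ⊆ P'.toFinset := by
            intro a ha
            simp only [Finset.mem_insert, Finset.mem_singleton] at ha
            rcases ha with rfl | rfl
            · exact List.mem_toFinset.mpr (path_one_mem hPath)
            · exact List.mem_toFinset.mpr (path_top_mem hPath)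
          have hc2 : ({1, n} : Finset ℕ).card = 2 := by
            rw [Finset.card_insert_of_notMem (by simp; omega), Finset.card_singleton]
          have hT1 : (P'.toFinset \ {1, n}).card = k := by
            rw [Finset.card_sdiff_of_subset hsub1, hT, hc2]
            omega
          have hsubpq : ({p, q} : Finset ℕ) ⊆ P'.toFinset \ {1, n} := by
            intro a ha
            simp only [Finset.mem_insert, Finset.mem_singleton] at ha
            rw [Finset.mem_sdiff, List.mem_toFinset]
            rcases ha with rfl | rfl
            · exact ⟨hpP, by simp only [Finset.mem_insert, Finset.mem_singleton]; tauto⟩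
            · exact ⟨hqP, by simp only [Finset.mem_insert, Finset.mem_singleton]; tauto⟩
          have hcpq : ({p, q} : Finset ℕ).card = 2 := by
            rw [Finset.card_insert_of_notMem (by simpa using hpq), Finset.card_singleton]
          have hT2 : ((P'.toFinset \ {1, n}) \ {p, q}).card = k - 2 := by
            rw [Finset.card_sdiff_of_subset hsubpq, hT1, hcpq]
          have hss : (Finset.range (n+1)).filter
              (fun v => v ∈ P' ∧ v ≠ 1 ∧ v ≠ n ∧ v ≠ p ∧ v ≠ q) ⊆
              (P'.toFinset \ {1, n}) \ {p, q} := by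
            intro v hv
            simp only [Finset.mem_filter] at hv
            obtain ⟨-, hvP, hv1, hvn, hvp, hvq⟩ := hv
            simp only [Finset.mem_sdiff, List.mem_toFinset, Finset.mem_insert,
              Finset.mem_singleton]
            tauto
          rw [← hT2]
          exact Finset.card_le_card hss
      _ = Sk1.card * (k - 2) := by rw [Finset.sum_const, smul_eq_mul]
  -- conclude
  have hLR : L.card ≤ R.card :=
    Finset.card_le_card_of_injOn _ hmaps hinj
  have hfin : ((n - 1 - k) * Sk.card) * (k - 2) ≤ Sk1.card * (k - 2) := by
    calc ((n - 1 - k) * Sk.card) * (k - 2) = Sk.card * ((n - 1 - k) * (k - 2)) := by ring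
      _ ≤ L.card := hcardL
      _ ≤ R.card := hLR
      _ ≤ Sk1.card * (k - 2) := hcardR
  exact Nat.le_of_mul_le_mul_right hfin (by omega)
end Counting

section Classify
open Classical in
lemma degenerate_empty (n m : ℕ) (hm : 3 ≤ m) (a b : ℕ × ℕ)
    (h1 : a.1 = 1) (h2 : a.2 = b.1) (h3 : b.2 = n) :
    (pathsF n m).filter (fun P => a ∈ arcsOf P ∧ b ∈ arcsOf P) = ∅ := by
  rw [Finset.eq_empty_iff_forall_notMem]
  intro P hP
  rw [Finset.mem_filter, mem_pathsF] at hP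
  obtain ⟨⟨hPath, hlen⟩, ha, hb⟩ := hP
  have ha' : (a.1, a.2) ∈ arcsOf P := by rwa [Prod.mk.eta]
  have hb' : (b.1, b.2) ∈ arcsOf P := by rwa [Prod.mk.eta]
  rw [mem_arcsOf_iff] at ha' hb'
  obtain ⟨i, hi, hi1, hi2⟩ := ha'
  obtain ⟨j, hj, hj1, hj2⟩ := hb'
  obtain ⟨h00, h0⟩ := path_getElem_zero hPath
  obtain ⟨hL0, hL⟩ := path_getElem_last hPath
  have hnd := hPath.2.2.2.1
  have hi0 : i = 0 := by
    have : P[i] = P[0] := by rw [hi1, h1, h0]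
    exact (List.Nodup.getElem_inj_iff hnd).mp this
  have hj1' : j = 1 := by
    have : P[j] = P[0+1] := by rw [hj1, ← h2, ← hi2]; simp only [hi0]
    exact (List.Nodup.getElem_inj_iff hnd).mp this
  have h2L : P[j+1] = P[P.length - 1] := by rw [hj2, h3, hL]
  have := (List.Nodup.getElem_inj_iff hnd).mp h2L
  omega

open Classical in
lemma pair_classify (n : ℕ) {P₀ : List ℕ} (hPath : IsPath (knArc n) 1 n P₀)
    {a b : ℕ × ℕ} (hab : a ≠ b) (ha : a ∈ arcsOf P₀) (hb : b ∈ arcsOf P₀) :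
    (∃ p q : ℕ, p ≠ q ∧ p ≠ 1 ∧ p ≠ n ∧ q ≠ 1 ∧ q ≠ n ∧
      (p = a.1 ∨ p = a.2 ∨ p = b.1 ∨ p = b.2) ∧
      (q = a.1 ∨ q = a.2 ∨ q = b.1 ∨ q = b.2)) ∨
    (a.1 = 1 ∧ a.2 = b.1 ∧ b.2 = n) ∨ (b.1 = 1 ∧ b.2 = a.1 ∧ a.2 = n) := by
  have ha' : (a.1, a.2) ∈ arcsOf P₀ := by rwa [Prod.mk.eta]
  have hb' : (b.1, b.2) ∈ arcsOf P₀ := by rwa [Prod.mk.eta]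
  rw [mem_arcsOf_iff] at ha' hb'
  obtain ⟨i, hi, hi1, hi2⟩ := ha'
  obtain ⟨j, hj, hj1, hj2⟩ := hb'
  have hnd := hPath.2.2.2.1
  have hij : i ≠ j := by
    intro hc
    subst hc
    exact hab (Prod.ext (hi1.symm.trans hj1) (hi2.symm.trans hj2))
  -- helper facts
  have hne1 : ∀ m : ℕ, ∀ hm : m < P₀.length, 0 < m → P₀[m] ≠ 1 :=
    fun m hm h0 => path_getElem_ne_one hPath hm h0
  have hnetop : ∀ m : ℕ, ∀ hm : m < P₀.length, m < P₀.length - 1 → P₀[m] ≠ n :=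
    fun m hm h0 => path_getElem_ne_top hPath hm h0
  have hinj : ∀ {m m' : ℕ} (hm : m < P₀.length) (hm' : m' < P₀.length),
      P₀[m] = P₀[m'] → m = m' := fun hm hm' hEq =>
    (List.Nodup.getElem_inj_iff hnd).mp hEq
  rcases Nat.lt_or_ge i j with hlt | hge
  · rcases Nat.eq_or_lt_of_le (Nat.succ_le_of_lt hlt) with heq | hlt2
    · -- j = i + 1, segment a.1 a.2=b.1 b.2
      have hshare : a.2 = b.1 := by
        have hij1 : i + 1 = j := by omega
        rw [← hi2, ← hj1]
        simp only [hij1]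
      by_cases hA : a.1 = 1
      · by_cases hB : b.2 = n
        · exact Or.inr (Or.inl ⟨hA, hshare, hB⟩)
        · -- p = a.2, q = b.2
          refine Or.inl ⟨a.2, b.2, ?_, ?_, ?_, ?_, hB, Or.inr (Or.inl rfl),
            Or.inr (Or.inr (Or.inr rfl))⟩
          · rw [← hi2, ← hj2]
            intro hc
            have := (List.Nodup.getElem_inj_iff hnd).mp hc
            omega
          · rw [← hi2]; exact hne1 _ _ (by omega)
          · rw [← hi2]; exact hnetop _ _ (by omega)
          · rw [← hj2]; exact hne1 _ _ (by omega)
      · -- p = a.1, q = a.2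
        refine Or.inl ⟨a.1, a.2, ?_, hA, ?_, ?_, ?_, Or.inl rfl, Or.inr (Or.inl rfl)⟩
        · rw [← hi1, ← hi2]
          intro hc
          have := (List.Nodup.getElem_inj_iff hnd).mp hc
          omega
        · rw [← hi1]; exact hnetop _ _ (by omega)
        · rw [← hi2]; exact hne1 _ _ (by omega)
        · rw [← hi2]; exact hnetop _ _ (by omega)
    · -- i + 1 < j : p = a.2, q = b.1
      refine Or.inl ⟨a.2, b.1, ?_, ?_, ?_, ?_, ?_, Or.inr (Or.inl rfl),
        Or.inr (Or.inr (Or.inl rfl))⟩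
      · rw [← hi2, ← hj1]
        intro hc
        have := (List.Nodup.getElem_inj_iff hnd).mp hc
        omega
      · rw [← hi2]; exact hne1 _ _ (by omega)
      · rw [← hi2]; exact hnetop _ _ (by omega)
      · rw [← hj1]; exact hne1 _ _ (by omega)
      · rw [← hj1]; exact hnetop _ _ (by omega)
  · -- symmetric: j < i
    have hlt : j < i := by omega
    rcases Nat.eq_or_lt_of_le (Nat.succ_le_of_lt hlt) with heq | hlt2
    · have hshare : b.2 = a.1 := by
        have hij1 : j + 1 = i := by omega
        rw [← hj2, ← hi1]
        simp only [hij1]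
      by_cases hA : b.1 = 1
      · by_cases hB : a.2 = n
        · exact Or.inr (Or.inr ⟨hA, hshare, hB⟩)
        · refine Or.inl ⟨b.2, a.2, ?_, ?_, ?_, ?_, hB, Or.inr (Or.inr (Or.inr rfl)),
            Or.inr (Or.inl rfl)⟩
          · rw [← hj2, ← hi2]
            intro hc
            have := (List.Nodup.getElem_inj_iff hnd).mp hc
            omega
          · rw [← hj2]; exact hne1 _ _ (by omega)
          · rw [← hj2]; exact hnetop _ _ (by omega)
          · rw [← hi2]; exact hne1 _ _ (by omega)
      · refine Or.inl ⟨b.1, b.2, ?_, hA, ?_, ?_, ?_, Or.inr (Or.inr (Or.inl rfl)),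
          Or.inr (Or.inr (Or.inr rfl))⟩
        · rw [← hj1, ← hj2]
          intro hc
          have := (List.Nodup.getElem_inj_iff hnd).mp hc
          omega
        · rw [← hj1]; exact hnetop _ _ (by omega)
        · rw [← hj2]; exact hne1 _ _ (by omega)
        · rw [← hj2]; exact hnetop _ _ (by omega)
    · refine Or.inl ⟨b.2, a.1, ?_, ?_, ?_, ?_, ?_, Or.inr (Or.inr (Or.inr rfl)),
        Or.inl rfl⟩
      · rw [← hj2, ← hi1]
        intro hc
        have := (List.Nodup.getElem_inj_iff hnd).mp hc
        omega
      · rw [← hj2]; exact hne1 _ _ (by omega)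
      · rw [← hj2]; exact hnetop _ _ (by omega)
      · rw [← hi1]; exact hne1 _ _ (by omega)
      · rw [← hi1]; exact hnetop _ _ (by omega)

open Classical in
/-- final per-pair counting inequality -/
lemma N_final (n k : ℕ) (hn : 4 ≤ n) (hk : 3 ≤ k) (hk2 : k ≤ n - 2)
    (a b : ℕ × ℕ) (hab : a ≠ b)
    (hcoex : ∃ P, IsPath (knArc n) 1 n P ∧ a ∈ arcsOf P ∧ b ∈ arcsOf P) :
    (n - 1 - k) * ((pathsF n k).filter (fun P => a ∈ arcsOf P ∧ b ∈ arcsOf P)).card ≤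
    ((pathsF n (k+1)).filter (fun P => a ∈ arcsOf P ∧ b ∈ arcsOf P)).card := by
  obtain ⟨P₀, hPath, ha, hb⟩ := hcoex
  rcases pair_classify n hPath hab ha hb with ⟨p, q, hpq, hp1, hpn, hq1, hqn, hpm, hqm⟩ | hdeg | hdeg
  · refine N_mono n k hn hk hk2 a b p q hpq hp1 hpn hq1 hqn ?_
    intro P hA hB
    have hA' : a.1 ∈ P ∧ a.2 ∈ P := by
      have : (a.1, a.2) ∈ arcsOf P := by rwa [Prod.mk.eta]
      exact ⟨(mem_of_mem_arcsOf this).1, (mem_of_mem_arcsOf this).2⟩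
    have hB' : b.1 ∈ P ∧ b.2 ∈ P := by
      have : (b.1, b.2) ∈ arcsOf P := by rwa [Prod.mk.eta]
      exact ⟨(mem_of_mem_arcsOf this).1, (mem_of_mem_arcsOf this).2⟩
    constructor
    · rcases hpm with rfl | rfl | rfl | rfl
      exacts [hA'.1, hA'.2, hB'.1, hB'.2]
    · rcases hqm with rfl | rfl | rfl | rfl
      exacts [hA'.1, hA'.2, hB'.1, hB'.2]
  · rw [degenerate_empty n k hk a b hdeg.1 hdeg.2.1 hdeg.2.2,
      degenerate_empty n (k+1) (by omega) a b hdeg.1 hdeg.2.1 hdeg.2.2]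
    simp
  · have hcomm : ∀ m : ℕ, (pathsF n m).filter (fun P => a ∈ arcsOf P ∧ b ∈ arcsOf P) =
        (pathsF n m).filter (fun P => b ∈ arcsOf P ∧ a ∈ arcsOf P) := by
      intro m
      apply Finset.filter_congr
      intro P _
      constructor <;> exact fun h => ⟨h.2, h.1⟩
    rw [hcomm k, hcomm (k+1),
      degenerate_empty n k hk b a hdeg.1 hdeg.2.1 hdeg.2.2,
      degenerate_empty n (k+1) (by omega) b a hdeg.1 hdeg.2.1 hdeg.2.2]
    simp
end Classify

section Sums
open Classical

noncomputable def Uarcs (n : ℕ) : Finset (ℕ × ℕ) :=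
  (Finset.range (n+1)) ×ˢ (Finset.range (n+1))

lemma arcs_subset_U {n : ℕ} {P : List ℕ} (hP : IsPath (knArc n) 1 n P) :
    ∀ g ∈ arcsOf P, g ∈ Uarcs n := by
  rintro ⟨u, v⟩ hg
  obtain ⟨hu, hv⟩ := mem_of_mem_arcsOf hg
  have h1 := path_vertex_bounds hP u hu
  have h2 := path_vertex_bounds hP v hv
  rw [Uarcs, Finset.mem_product, Finset.mem_range, Finset.mem_range]
  omega

lemma cost_eq {n : ℕ} {P : List ℕ} (hP : IsPath (knArc n) 1 n P)
    (Q : ℕ × ℕ → ℕ × ℕ → ℝ) :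
    cost (fun _ => 0) Q P = ∑ a ∈ Uarcs n, ∑ b ∈ Uarcs n,
      if a ∈ arcsOf P ∧ b ∈ arcsOf P then Q a b else 0 := by
  have hnd := nodup_arcsOf hP.2.2.2.1
  have htF : (Uarcs n).filter (· ∈ arcsOf P) = (arcsOf P).toFinset := by
    ext g
    rw [Finset.mem_filter, List.mem_toFinset]
    exact ⟨fun h => h.2, fun h => ⟨arcs_subset_U hP g h, h⟩⟩
  have hlist : ∀ G : ℕ × ℕ → ℝ, ((arcsOf P).map G).sum =
      ∑ a ∈ Uarcs n, if a ∈ arcsOf P then G a else 0 := by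
    intro G
    rw [← List.sum_toFinset G hnd, ← htF, Finset.sum_filter]
  rw [cost, linCost]
  have hzero : ((arcsOf P).map (fun _ => (0:ℝ))).sum = 0 := by simp
  rw [hzero, add_zero, hlist]
  refine Finset.sum_congr rfl ?_
  intro a _
  by_cases ha : a ∈ arcsOf P
  · simp only [ha, if_true, true_and]
    rw [hlist]
  · simp only [ha, if_false, false_and]
    rw [Finset.sum_const, smul_zero]

lemma CPsum_eq (n k : ℕ) (Q : ℕ × ℕ → ℕ × ℕ → ℝ) :
    CPsum n Q k = ∑ a ∈ Uarcs n, ∑ b ∈ Uarcs n, Q a b *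
      (((pathsF n k).filter (fun P => a ∈ arcsOf P ∧ b ∈ arcsOf P)).card : ℝ) := by
  have h1 : CPsum n Q k = ∑ P ∈ pathsF n k, cost (fun _ => 0) Q P := by
    rw [CPsum]
    rw [← finsum_mem_coe_finset]
    congr 1
    ext P
    rw [Finset.mem_coe, mem_pathsF]
  rw [h1]
  have h2 : ∑ P ∈ pathsF n k, cost (fun _ => 0) Q P =
      ∑ P ∈ pathsF n k, ∑ a ∈ Uarcs n, ∑ b ∈ Uarcs n,
        if a ∈ arcsOf P ∧ b ∈ arcsOf P then Q a b else 0 := by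
    refine Finset.sum_congr rfl ?_
    intro P hP
    exact cost_eq (mem_pathsF.mp hP).1 Q
  rw [h2, Finset.sum_comm]
  refine Finset.sum_congr rfl ?_
  intro a _
  rw [Finset.sum_comm]
  refine Finset.sum_congr rfl ?_
  intro b _
  rw [← Finset.sum_filter, Finset.sum_const, nsmul_eq_mul, mul_comm]
end Sums

open Classical in
/-- On `K_n^*` (`n ≥ 4`), the average cost of the `s`-`t` paths of length `k` is at most
the average cost of the `s`-`t` paths of length `k+1`, for `k = 3,…,n-2`, where the
number of `s`-`t` paths of length `k` is `C(n-2,k-1)·(k-1)!`. -/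
theorem stmt_7 (n : ℕ) (hn : 4 ≤ n) (Q : ℕ × ℕ → ℕ × ℕ → ℝ)
    (hQ0 : ∀ e f, 0 ≤ Q e f) (hQs : ∀ e f, Q e f = Q f e) (hQd : ∀ e, Q e e = 0)
    (hQpath : ∀ e f,
      (¬ ∃ P, IsPath (knArc n) 1 n P ∧ e ∈ arcsOf P ∧ f ∈ arcsOf P) → Q e f = 0) :
    ∀ k, 3 ≤ k → k ≤ n - 2 →
      CPsum n Q k / (((n - 2).choose (k - 1) * Nat.factorial (k - 1) : ℕ) : ℝ) ≤
      CPsum n Q (k + 1) / (((n - 2).choose k * Nat.factorial k : ℕ) : ℝ) := by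
  intro k hk hk2
  set Dk : ℕ := (n - 2).choose (k - 1) * Nat.factorial (k - 1) with hDk
  set Dk1 : ℕ := (n - 2).choose k * Nat.factorial k with hDk1
  have hDkpos : 0 < Dk := by
    rw [hDk]
    exact Nat.mul_pos (Nat.choose_pos (by omega)) (Nat.factorial_pos _)
  have hDk1pos : 0 < Dk1 := by
    rw [hDk1]
    exact Nat.mul_pos (Nat.choose_pos (by omega)) (Nat.factorial_pos _)
  -- Dk1 = (n - 1 - k) * Dk
  have hDrel : Dk1 = (n - 1 - k) * Dk := by
    have hfp : 0 < (n - 2 - k).factorial := Nat.factorial_pos _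
    apply Nat.eq_of_mul_eq_mul_right hfp
    have h1 : (n - 2).choose (k - 1) * (k - 1).factorial * ((n - 2) - (k - 1)).factorial
        = (n - 2).factorial := Nat.choose_mul_factorial_mul_factorial (by omega)
    have h2 : (n - 2).choose k * k.factorial * ((n - 2) - k).factorial
        = (n - 2).factorial := Nat.choose_mul_factorial_mul_factorial (by omega)
    have h3 : (n - 2) - (k - 1) = (n - 2 - k) + 1 := by omega
    rw [h3, Nat.factorial_succ] at h1
    have h4 : n - 2 - k + 1 = n - 1 - k := by omega
    rw [h4] at h1
    calc Dk1 * (n - 2 - k).factorial = (n - 2).factorial := h2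
      _ = (n - 2).choose (k - 1) * (k - 1).factorial *
            ((n - 1 - k) * (n - 2 - k).factorial) := h1.symm
      _ = (n - 1 - k) * Dk * (n - 2 - k).factorial := by rw [hDk]; ring
  -- the key sum inequality
  have hkey : ((n - 1 - k : ℕ) : ℝ) * CPsum n Q k ≤ CPsum n Q (k + 1) := by
    rw [CPsum_eq n k Q, CPsum_eq n (k+1) Q, Finset.mul_sum]
    refine Finset.sum_le_sum ?_
    intro a _
    rw [Finset.mul_sum]
    refine Finset.sum_le_sum ?_
    intro b _
    by_cases hab : a = b
    · subst hab
      rw [hQd a]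
      simp
    by_cases hco : ∃ P, IsPath (knArc n) 1 n P ∧ a ∈ arcsOf P ∧ b ∈ arcsOf P
    · have hN := N_final n k hn hk hk2 a b hab hco
      have hcast : ((n - 1 - k : ℕ) : ℝ) *
          (((pathsF n k).filter (fun P => a ∈ arcsOf P ∧ b ∈ arcsOf P)).card : ℝ) ≤
          (((pathsF n (k+1)).filter (fun P => a ∈ arcsOf P ∧ b ∈ arcsOf P)).card : ℝ) := by
        rw [← Nat.cast_mul]
        exact_mod_cast hN
      calc ((n - 1 - k : ℕ) : ℝ) * (Q a b * _) = Q a b * (((n - 1 - k : ℕ) : ℝ) * _) := by ring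
        _ ≤ Q a b * _ := mul_le_mul_of_nonneg_left hcast (hQ0 a b)
    · rw [hQpath a b hco]
      simp
  -- conclude with division
  rw [div_le_div_iff₀ (by exact_mod_cast hDkpos) (by exact_mod_cast hDk1pos)]
  have : (Dk1 : ℝ) = ((n - 1 - k : ℕ) : ℝ) * (Dk : ℝ) := by
    rw [hDrel]; push_cast; ring
  rw [this]
  calc CPsum n Q k * (((n - 1 - k : ℕ) : ℝ) * (Dk : ℝ))
      = (((n - 1 - k : ℕ) : ℝ) * CPsum n Q k) * (Dk : ℝ) := by ring
    _ ≤ CPsum n Q (k + 1) * (Dk : ℝ) :=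
        mul_le_mul_of_nonneg_right hkey (by exact_mod_cast Nat.zero_le Dk)
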